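/- With Q(z) as above and S(z) := -Q(z)⁻¹Q(z⁻¹), for any z on the unit circle (where all inverses exist) the matrix S(z) is unitary. -/

import Mathlib

open Matrix

/-- `Q(z) = 1 - z (A + Bᴴ (z⁻¹ + z - D)⁻¹ B)`. -/
noncomputable def Qmat {n m : ℕ} (A : Matrix (Fin n) (Fin n) ℂ)
    (B : Matrix (Fin m) (Fin n) ℂ) (D : Matrix (Fin m) (Fin m) ℂ) (z : ℂ) :
    Matrix (Fin n) (Fin n) ℂ :=
  1 - z • (A + Bᴴ * ((z⁻¹ + z) • (1 : Matrix (Fin m) (Fin m) ℂ) - D)⁻¹ * B)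

/-- `S(z) = -Q(z)⁻¹ Q(z⁻¹)`. -/
noncomputable def Smat {n m : ℕ} (A : Matrix (Fin n) (Fin n) ℂ)
    (B : Matrix (Fin m) (Fin n) ℂ) (D : Matrix (Fin m) (Fin m) ℂ) (z : ℂ) :
    Matrix (Fin n) (Fin n) ℂ :=
  -((Qmat A B D z)⁻¹ * Qmat A B D z⁻¹)

theorem stmt1 {n m : ℕ} (A : Matrix (Fin n) (Fin n) ℂ) (hA : A.IsHermitian)
    (D : Matrix (Fin m) (Fin m) ℂ) (hD : D.IsHermitian)
    (B : Matrix (Fin m) (Fin n) ℂ) (z : ℂ) (hz : ‖z‖ = 1)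
    (hinvD : IsUnit ((z⁻¹ + z) • (1 : Matrix (Fin m) (Fin m) ℂ) - D).det)
    (hQz : IsUnit (Qmat A B D z).det)
    (hQzi : IsUnit (Qmat A B D z⁻¹).det) :
    (Smat A B D z)ᴴ * Smat A B D z = 1 ∧ Smat A B D z * (Smat A B D z)ᴴ = 1 := by
  have hz0 : z ≠ 0 := by
    intro h; rw [h] at hz; simp at hz
  have h1 : z * (starRingEnd ℂ) z = 1 := by
    rw [Complex.mul_conj]
    norm_cast
    rw [Complex.normSq_eq_norm_sq, hz]; norm_num
  have hstar : (starRingEnd ℂ) z = z⁻¹ := ((inv_eq_of_mul_eq_one_right h1)).symm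
  have hstar' : (starRingEnd ℂ) z⁻¹ = z := by
    rw [map_inv₀, hstar, inv_inv]
  have hs1 : star z = z⁻¹ := hstar
  have hs2 : star z⁻¹ = z := hstar'
  set M : Matrix (Fin m) (Fin m) ℂ := (z⁻¹ + z) • (1 : Matrix (Fin m) (Fin m) ℂ) - D with hM
  have hMH : Mᴴ = M := by
    rw [hM, conjTranspose_sub, conjTranspose_smul, conjTranspose_one, hD.eq,
      star_add, hs1, hs2, add_comm z z⁻¹]
  set T : Matrix (Fin n) (Fin n) ℂ := A + Bᴴ * M⁻¹ * B with hT
  have hTH : Tᴴ = T := by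
    rw [hT, conjTranspose_add, conjTranspose_mul, conjTranspose_mul,
      conjTranspose_nonsing_inv, hMH, conjTranspose_conjTranspose, hA.eq, ← Matrix.mul_assoc]
  have hQ : Qmat A B D z = 1 - z • T := rfl
  have hQ' : Qmat A B D z⁻¹ = 1 - z⁻¹ • T := by
    rw [Qmat, inv_inv z, add_comm z z⁻¹, ← hM, ← hT]
  set Q := Qmat A B D z with hQdef
  set Q' := Qmat A B D z⁻¹ with hQ'def
  have hQH : Qᴴ = Q' := by
    rw [hQ, hQ', conjTranspose_sub, conjTranspose_one, conjTranspose_smul, hTH, hs1]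
  have hcomm : Q * Q' = Q' * Q := by
    rw [hQ, hQ']
    simp only [sub_mul, mul_sub, one_mul, mul_one, Matrix.smul_mul, Matrix.mul_smul,
      smul_smul]
    rw [mul_comm z z⁻¹]
    abel
  have hQQ : Q * Q⁻¹ = 1 := Matrix.mul_nonsing_inv _ hQz
  have hQQ2 : Q⁻¹ * Q = 1 := Matrix.nonsing_inv_mul _ hQz
  have hQ'Q' : Q' * Q'⁻¹ = 1 := Matrix.mul_nonsing_inv _ hQzi
  have hQ'Q'2 : Q'⁻¹ * Q' = 1 := Matrix.nonsing_inv_mul _ hQzi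
  have hrev : Q'⁻¹ * Q⁻¹ = Q⁻¹ * Q'⁻¹ := by
    rw [← Matrix.mul_inv_rev, ← Matrix.mul_inv_rev, hcomm]
  have hQ'H : Q'ᴴ = Q := by rw [← hQH, conjTranspose_conjTranspose]
  have hQinvH : (Q⁻¹)ᴴ = Q'⁻¹ := by rw [conjTranspose_nonsing_inv, hQH]
  have hS : Smat A B D z = -(Q⁻¹ * Q') := rfl
  have hSH : (Smat A B D z)ᴴ = -(Q * Q'⁻¹) := by
    rw [hS, conjTranspose_neg, conjTranspose_mul, hQ'H, hQinvH]
  constructor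
  · rw [hSH, hS, neg_mul_neg, mul_assoc, ← mul_assoc Q'⁻¹, hrev, mul_assoc,
      hQ'Q'2, mul_one, hQQ]
  · rw [hSH, hS, neg_mul_neg, mul_assoc, ← mul_assoc Q', ← hcomm, mul_assoc Q,
      hQ'Q', mul_one, hQQ2]
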